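/- Let $L$ be a discrete random variable with finite range $E$, all atoms of positive probability, $q^x_t := \mathbb{P}(L=x|\mathcal{F}_t)/\mathbb{P}(L=x)$, and $\mathcal{G}_t := \mathcal{F}_t\vee\sigma(L)$. If $\mathbb{E}[1/q^L_T]=1$ (equivalently, $\mathbb{P}(q^x_T>0)=1$ for all $x\in E$), then the process $(1/q^L_t)_{t\in[0,T]}$ is a $(\mathcal{G}_t)$-martingale. Conversely, if $(1/q^L_t)$ is a $(\mathcal{G}_t)$-martingale, then $\mathbb{E}[1/q^L_T]=1$ (using $q^L_0=1$). -/

import Mathlib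

open MeasureTheory ProbabilityTheory
open scoped ENNReal NNReal

section Helpers

variable {Ω : Type*} {m0 : MeasurableSpace Ω} {μ : Measure Ω} [IsProbabilityMeasure μ]

lemma vi_core {m : MeasurableSpace Ω} (hm : m ≤ m0) {f : Ω → ℝ}
    (hf : Integrable f μ) (hf0 : 0 ≤ᵐ[μ] f) {g : Ω → ENNReal} (hg : Measurable[m] g) :
    ∫⁻ ω, ENNReal.ofReal (f ω) * g ω ∂μ
      = ∫⁻ ω, ENNReal.ofReal ((μ[f|m]) ω) * g ω ∂μ := by
  have hF : AEMeasurable (fun ω => ENNReal.ofReal (f ω)) μ :=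
    hf.aestronglyMeasurable.aemeasurable.ennreal_ofReal
  have hF' : AEMeasurable (fun ω => ENNReal.ofReal ((μ[f|m]) ω)) μ :=
    ((stronglyMeasurable_condExp.mono hm).measurable.ennreal_ofReal).aemeasurable
  refine @Measurable.ennreal_induction Ω m
    (fun g => ∫⁻ ω, ENNReal.ofReal (f ω) * g ω ∂μ
      = ∫⁻ ω, ENNReal.ofReal ((μ[f|m]) ω) * g ω ∂μ) ?_ ?_ ?_ g hg
  · intro c A hA
    have hA0 : MeasurableSet[m0] A := hm A hA
    have key : ∫ ω in A, f ω ∂μ = ∫ ω in A, (μ[f|m]) ω ∂μ := (setIntegral_condExp hm hf hA).symm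
    have h1 : ∀ (F : Ω → ℝ), Integrable F μ → (0 ≤ᵐ[μ] F) →
        ∫⁻ ω, ENNReal.ofReal (F ω) * (A.indicator (fun _ => c)) ω ∂μ
          = ENNReal.ofReal (∫ ω in A, F ω ∂μ) * c := by
      intro F hFi hF0
      have e : ∀ ω, ENNReal.ofReal (F ω) * (A.indicator (fun _ => c)) ω
          = A.indicator (fun ω => ENNReal.ofReal (F ω) * c) ω := by
        intro ω; by_cases h : ω ∈ A <;> simp [h]
      rw [lintegral_congr e, lintegral_indicator hA0,
        lintegral_mul_const'' c (hFi.restrict.aestronglyMeasurable.aemeasurable.ennreal_ofReal),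
        ← ofReal_integral_eq_lintegral_ofReal hFi.restrict (ae_restrict_of_ae hF0)]
    rw [h1 f hf hf0, h1 _ integrable_condExp (condExp_nonneg hf0), key]
  · intro g1 g2 _ hg1m hg2m H1 H2
    have e : ∀ (F : Ω → ℝ≥0∞), AEMeasurable F μ →
        ∫⁻ ω, F ω * (g1 + g2) ω ∂μ = ∫⁻ ω, F ω * g1 ω ∂μ + ∫⁻ ω, F ω * g2 ω ∂μ := by
      intro F hFm
      simp_rw [Pi.add_apply, mul_add]
      exact lintegral_add_left' (hFm.mul (hg1m.mono hm le_rfl).aemeasurable) _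
    rw [e _ hF, e _ hF', H1, H2]
  · intro gn hgn hmono H
    have e : ∀ (F : Ω → ℝ≥0∞), AEMeasurable F μ →
        ∫⁻ ω, F ω * (⨆ n, gn n ω) ∂μ = ⨆ n, ∫⁻ ω, F ω * gn n ω ∂μ := by
      intro F hFm
      simp_rw [ENNReal.mul_iSup]
      exact lintegral_iSup' (fun n => hFm.mul ((hgn n).mono hm le_rfl).aemeasurable)
        (Filter.Eventually.of_forall fun ω n k hnk => mul_le_mul_right (hmono hnk ω) _)
    rw [e _ hF, e _ hF']
    exact iSup_congr H

/-- Conditional expectation of an a.e. positive integrable function is a.e. positive. -/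
lemma vi_condexp_pos {m : MeasurableSpace Ω} (hm : m ≤ m0) {f : Ω → ℝ}
    (hf : Integrable f μ) (hf0 : ∀ᵐ ω ∂μ, 0 < f ω) : ∀ᵐ ω ∂μ, 0 < (μ[f|m]) ω := by
  set g := μ[f|m] with hg
  have hgm : Measurable[m] g := stronglyMeasurable_condExp.measurable
  set A : Set Ω := {ω | g ω ≤ 0} with hA
  have hAm : MeasurableSet[m] A := measurableSet_le hgm measurable_const
  have hAm0 : MeasurableSet[m0] A := hm A hAm
  have h2 : ∫ ω in A, g ω ∂μ = ∫ ω in A, f ω ∂μ := setIntegral_condExp hm hf hAm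
  have h3 : ∫ ω in A, g ω ∂μ ≤ 0 :=
    @setIntegral_nonpos Ω m0 μ g A hAm0 fun ω hω => hω
  have h4 : 0 ≤ ∫ ω in A, f ω ∂μ :=
    @setIntegral_nonneg_ae Ω m0 μ f A hAm0 <| hf0.mono fun ω h _ => h.le
  have h5 : ∫ ω in A, f ω ∂μ = 0 := le_antisymm (h2 ▸ h3) h4
  have h6 : f =ᵐ[μ.restrict A] 0 :=
    (integral_eq_zero_iff_of_nonneg_ae (ae_restrict_of_ae (hf0.mono fun ω h => h.le))
      hf.restrict).mp h5
  have h7 : ∀ᵐ ω ∂μ.restrict A, False :=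
    (h6.and (ae_restrict_of_ae hf0)).mono fun ω ⟨he, hp⟩ => by
      rw [Pi.zero_apply] at he; exact absurd (he ▸ hp) (lt_irrefl 0)
  have h8 : μ A = 0 := by
    have := Filter.eventually_false_iff_eq_bot.mp h7
    have h9 : μ.restrict A = 0 := ae_eq_bot.mp this
    have := Measure.restrict_apply_univ (μ := μ) A
    rw [h9] at this
    simpa using this.symm
  rw [Filter.eventually_iff, mem_ae_iff]
  have : {ω | 0 < g ω}ᶜ = A := by
    ext ω; simp [A, not_lt]
  rwa [this]


lemma vi_main {E : Type*} [MeasurableSpace E] [MeasurableSingletonClass E] {L : Ω → E}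
    (hL : Measurable L) (x : E) {m : MeasurableSpace Ω} (hm : m ≤ m0)
    {B : Set Ω} (hB : MeasurableSet[m] B) :
    Integrable (fun ω => (μ {ω' | L ω' = x}).toReal *
        ((μ[Set.indicator {ω' | L ω' = x} (fun _ => (1:ℝ)) | m]) ω)⁻¹)
      (μ.restrict (B ∩ {ω | L ω = x})) ∧
    ∫ ω in B ∩ {ω | L ω = x}, (μ {ω' | L ω' = x}).toReal *
        ((μ[Set.indicator {ω' | L ω' = x} (fun _ => (1:ℝ)) | m]) ω)⁻¹ ∂μ
      = (μ {ω' | L ω' = x}).toReal *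
        (μ (B ∩ {ω | 0 < (μ[Set.indicator {ω' | L ω' = x} (fun _ => (1:ℝ)) | m]) ω})).toReal := by
  letI : MeasurableSpace Ω := m0
  set S : Set Ω := {ω' | L ω' = x} with hS
  have hSmeas : MeasurableSet[m0] S := hL (measurableSet_singleton x)
  set f : Ω → ℝ := S.indicator (fun _ => (1:ℝ)) with hf
  have hfi : Integrable f μ := (integrable_const 1).indicator hSmeas
  have hf0 : 0 ≤ᵐ[μ] f := Filter.Eventually.of_forall fun ω =>
    Set.indicator_nonneg (fun _ _ => zero_le_one) ω
  set Z : Ω → ℝ := μ[f|m] with hZ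
  have hZm : Measurable[m] Z := stronglyMeasurable_condExp.measurable
  have hZm0 : Measurable[m0] Z := (stronglyMeasurable_condExp.mono hm).measurable
  have hZ0 : 0 ≤ᵐ[μ] Z := condExp_nonneg hf0
  set U : Set Ω := {ω | 0 < Z ω} with hU
  have hUm : MeasurableSet[m] U := measurableSet_lt measurable_const hZm
  have hUm0 : MeasurableSet[m0] U := hm U hUm
  have hBm0 : MeasurableSet[m0] B := hm B hB
  set c : ℝ := (μ S).toReal with hc
  set g : Ω → ℝ≥0∞ := (B ∩ U).indicator (fun ω => (ENNReal.ofReal (Z ω))⁻¹) with hg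
  have hgm : Measurable[m] g := (hZm.ennreal_ofReal.inv).indicator (hB.inter hUm)
  have key : ∫⁻ ω, ENNReal.ofReal (f ω) * g ω ∂μ = ∫⁻ ω, ENNReal.ofReal (Z ω) * g ω ∂μ :=
    vi_core hm hfi hf0 hgm
  have hRHS : ∫⁻ ω, ENNReal.ofReal (Z ω) * g ω ∂μ = μ (B ∩ U) := by
    have e : ∀ ω, ENNReal.ofReal (Z ω) * g ω = (B ∩ U).indicator (fun _ => (1:ℝ≥0∞)) ω := by
      intro ω
      by_cases h : ω ∈ B ∩ U
      · have hz : ENNReal.ofReal (Z ω) ≠ 0 := (ENNReal.ofReal_pos.mpr h.2).ne'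
        simp only [g, Set.indicator_of_mem h]
        rw [ENNReal.mul_inv_cancel hz ENNReal.ofReal_ne_top]
      · simp [g, Set.indicator_of_notMem h]
    rw [lintegral_congr e, lintegral_indicator (hBm0.inter hUm0)]
    simp
  have hLHS : ∫⁻ ω, ENNReal.ofReal (f ω) * g ω ∂μ
      = ∫⁻ ω in B ∩ S, ENNReal.ofReal ((Z ω)⁻¹) ∂μ := by
    rw [← lintegral_indicator (hBm0.inter hSmeas)]
    refine lintegral_congr fun ω => ?_
    by_cases hωS : ω ∈ S
    · by_cases hωB : ω ∈ B
      · have hf1 : f ω = 1 := Set.indicator_of_mem hωS _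
        by_cases hωU : ω ∈ U
        · have : ENNReal.ofReal ((Z ω)⁻¹) = (ENNReal.ofReal (Z ω))⁻¹ :=
            ENNReal.ofReal_inv_of_pos hωU
          simp [g, Set.indicator_of_mem (Set.mem_inter hωB hωU),
            Set.indicator_of_mem (Set.mem_inter hωB hωS), hf1, this]
        · have hz : Z ω ≤ 0 := not_lt.mp hωU
          have : ENNReal.ofReal ((Z ω)⁻¹) = 0 :=
            ENNReal.ofReal_of_nonpos (inv_nonpos.mpr hz)
          simp [g, Set.indicator_of_notMem (fun h : ω ∈ B ∩ U => hωU h.2),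
            Set.indicator_of_mem (Set.mem_inter hωB hωS), this]
      · simp [g, Set.indicator_of_notMem (fun h : ω ∈ B ∩ U => hωB h.1),
          Set.indicator_of_notMem (fun h : ω ∈ B ∩ S => hωB h.1)]
    · have hf0' : f ω = 0 := Set.indicator_of_notMem hωS _
      simp [hf0', Set.indicator_of_notMem (fun h : ω ∈ B ∩ S => hωS h.2)]
  have hlin : ∫⁻ ω in B ∩ S, ENNReal.ofReal ((Z ω)⁻¹) ∂μ = μ (B ∩ U) := by
    rw [← hLHS, key, hRHS]
  have hnn : 0 ≤ᵐ[μ.restrict (B ∩ S)] fun ω => c * (Z ω)⁻¹ :=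
    ae_restrict_of_ae (hZ0.mono fun ω h =>
      mul_nonneg ENNReal.toReal_nonneg (inv_nonneg.mpr h))
  have hmeas : AEStronglyMeasurable (fun ω => c * (Z ω)⁻¹) (μ.restrict (B ∩ S)) :=
    ((hZm0.inv.const_mul c).stronglyMeasurable).aestronglyMeasurable.restrict
  have hofReal : ∀ ω, ENNReal.ofReal (c * (Z ω)⁻¹)
      = ENNReal.ofReal c * ENNReal.ofReal ((Z ω)⁻¹) := fun ω =>
    ENNReal.ofReal_mul ENNReal.toReal_nonneg
  have hlin2 : ∫⁻ ω in B ∩ S, ENNReal.ofReal (c * (Z ω)⁻¹) ∂μ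
      = ENNReal.ofReal c * μ (B ∩ U) := by
    simp_rw [hofReal]
    rw [lintegral_const_mul' _ _ ENNReal.ofReal_ne_top, hlin]
  have hint : Integrable (fun ω => c * (Z ω)⁻¹) (μ.restrict (B ∩ S)) := by
    refine ⟨hmeas, ?_⟩
    rw [hasFiniteIntegral_iff_norm]
    have e2 : ∫⁻ ω in B ∩ S, ENNReal.ofReal ‖c * (Z ω)⁻¹‖ ∂μ
        = ∫⁻ ω in B ∩ S, ENNReal.ofReal (c * (Z ω)⁻¹) ∂μ := by
      refine lintegral_congr_ae (hnn.mono fun ω h => ?_)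
      simp only [Pi.zero_apply] at h
      simp only [Real.norm_of_nonneg h]
    rw [e2, hlin2]
    exact ENNReal.mul_lt_top ENNReal.ofReal_lt_top (measure_lt_top μ _)
  have hreal : ∫ ω in B ∩ S, c * (Z ω)⁻¹ ∂μ = c * (μ (B ∩ U)).toReal := by
    rw [integral_eq_lintegral_of_nonneg_ae hnn hmeas, hlin2, ENNReal.toReal_mul,
      ENNReal.toReal_ofReal ENNReal.toReal_nonneg]
  exact ⟨hint, hreal⟩

end Helpers

/-- Auxiliary σ-algebra used for the decomposition of sets in `ms ⊔ σ(L)`. -/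
def viP {Ω E : Type*} (ms : MeasurableSpace Ω) (L : Ω → E) : MeasurableSpace Ω where
  MeasurableSet' A := ∀ y : E, ∃ B, MeasurableSet[ms] B ∧
    A ∩ {ω | L ω = y} = B ∩ {ω | L ω = y}
  measurableSet_empty := fun y => ⟨∅, MeasurableSet.empty, by simp⟩
  measurableSet_compl := by
    intro A hA y
    obtain ⟨B, hB, hBe⟩ := hA y
    refine ⟨Bᶜ, hB.compl, ?_⟩
    ext ω
    constructor
    · rintro ⟨h1, h2⟩
      refine ⟨fun hB' => h1 ?_, h2⟩
      have : ω ∈ B ∩ {ω | L ω = y} := ⟨hB', h2⟩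
      exact (hBe ▸ this).1
    · rintro ⟨h1, h2⟩
      refine ⟨fun hA' => h1 ?_, h2⟩
      have : ω ∈ A ∩ {ω | L ω = y} := ⟨hA', h2⟩
      exact (hBe ▸ this).1
  measurableSet_iUnion := by
    intro s hs y
    choose B hB hBe using fun n => hs n y
    refine ⟨⋃ n, B n, MeasurableSet.iUnion hB, ?_⟩
    rw [Set.iUnion_inter, Set.iUnion_inter]
    exact Set.iUnion_congr hBe

/-- Decomposition of sets in `ms ⊔ σ(L)`. -/
lemma vi_decomp {Ω E : Type*} [MeasurableSpace E] {L : Ω → E} (ms : MeasurableSpace Ω)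
    {A : Set Ω} (hA : MeasurableSet[ms ⊔ MeasurableSpace.comap L ⊤] A) (x : E) :
    ∃ B, MeasurableSet[ms] B ∧ A ∩ {ω | L ω = x} = B ∩ {ω | L ω = x} := by
  have h1 : ms ≤ viP ms L := fun A hA => fun y => ⟨A, hA, rfl⟩
  have h2 : MeasurableSpace.comap L ⊤ ≤ viP ms L := by
    rintro A ⟨S, -, rfl⟩ y
    by_cases hy : y ∈ S
    · exact ⟨Set.univ, MeasurableSet.univ, by
        ext ω; simp only [Set.mem_inter_iff, Set.mem_preimage, Set.mem_setOf_eq,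
          Set.mem_univ, true_and]
        exact ⟨fun ⟨_, h⟩ => h, fun h => ⟨h ▸ hy, h⟩⟩⟩
    · exact ⟨∅, MeasurableSet.empty, by
        ext ω; simp only [Set.mem_inter_iff, Set.mem_preimage, Set.mem_setOf_eq,
          Set.mem_empty_iff_false, false_and, iff_false, not_and]
        intro hS hl; exact hy (hl ▸ hS)⟩
  exact (sup_le h1 h2 : _ ≤ viP ms L) A hA x

/-- Let `L` be a discrete random variable with finite range, all atoms of
positive probability, `q^x_t := P(L = x | 𝓕_t)/P(L = x)` and `𝓖_t = 𝓕_t ⊔ σ(L)`, with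
`𝓕_0` trivial. Then `E[1/q^L_T] = 1` implies that `(1/q^L_t)_{t ∈ [0,T]}` is a
`𝓖`-martingale; conversely, if `(1/q^L_t)` is a `𝓖`-martingale then `E[1/q^L_T] = 1`
(using `q^L_0 = 1`). -/
theorem value_info_stmt17
    {Ω : Type*} {m0 : MeasurableSpace Ω} (μ : Measure Ω) [IsProbabilityMeasure μ]
    (ℱ : Filtration ℝ m0)
    (hF0 : ∀ A : Set Ω, MeasurableSet[ℱ 0] A → μ A = 0 ∨ μ A = 1)
    {E : Type*} [Fintype E] [MeasurableSpace E] [MeasurableSingletonClass E]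
    (L : Ω → E) (hL : Measurable L)
    (hpos : ∀ x : E, 0 < μ {ω | L ω = x})
    (T : ℝ) (hT : 0 ≤ T)
    (q : ℝ → E → Ω → ℝ)
    (hq : ∀ t x, q t x =
      fun ω => (μ[Set.indicator {ω' | L ω' = x} (fun _ => (1 : ℝ)) | ℱ t]) ω
        / (μ {ω' | L ω' = x}).toReal) :
    ((∫ ω, (q T (L ω) ω)⁻¹ ∂μ = 1) ↔ (∀ x : E, μ {ω | 0 < q T x ω} = 1))
    ∧ ((∫ ω, (q T (L ω) ω)⁻¹ ∂μ = 1) →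
        (∀ s t : ℝ, 0 ≤ s → s ≤ t → t ≤ T →
          μ[(fun ω => (q t (L ω) ω)⁻¹) | (ℱ s) ⊔ (MeasurableSpace.comap L ⊤)]
            =ᵐ[μ] fun ω => (q s (L ω) ω)⁻¹))
    ∧ ((∀ s t : ℝ, 0 ≤ s → s ≤ t → t ≤ T →
          μ[(fun ω => (q t (L ω) ω)⁻¹) | (ℱ s) ⊔ (MeasurableSpace.comap L ⊤)]
            =ᵐ[μ] fun ω => (q s (L ω) ω)⁻¹) →
        ∫ ω, (q T (L ω) ω)⁻¹ ∂μ = 1) := by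
  classical
  -- Notation
  set S : E → Set Ω := fun x => {ω' | L ω' = x} with hSdef
  have hSmeas : ∀ x, MeasurableSet[m0] (S x) := fun x => hL (measurableSet_singleton x)
  set c : E → ℝ := fun x => (μ (S x)).toReal with hcdef
  have hc_pos : ∀ x, 0 < c x := fun x => ENNReal.toReal_pos (hpos x).ne' (measure_ne_top μ _)
  set Z : ℝ → E → Ω → ℝ :=
    fun t x => μ[Set.indicator {ω' | L ω' = x} (fun _ => (1:ℝ)) | ℱ t] with hZdef
  set U : ℝ → E → Set Ω := fun t x => {ω | 0 < Z t x ω} with hUdef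
  have hZsm : ∀ t x, StronglyMeasurable[ℱ t] (Z t x) := fun t x => stronglyMeasurable_condExp
  have hUmeas : ∀ t x, MeasurableSet[m0] (U t x) := fun t x =>
    measurableSet_lt measurable_const ((hZsm t x).mono (ℱ.le t)).measurable
  have hZnn : ∀ t x, 0 ≤ᵐ[μ] Z t x := fun t x =>
    condExp_nonneg (Filter.Eventually.of_forall fun ω =>
      Set.indicator_nonneg (fun _ _ => zero_le_one) ω)
  -- basic identities
  have hqinv : ∀ t x ω, (q t x ω)⁻¹ = c x * (Z t x ω)⁻¹ := by
    intro t x ω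
    rw [hq t x]
    simp only []
    rw [inv_div, div_eq_mul_inv]
  have hqpos_iff : ∀ t x ω, (0 < q t x ω ↔ 0 < Z t x ω) := by
    intro t x ω
    rw [hq t x]
    simp only []
    constructor
    · intro h
      rcases div_pos_iff.mp h with ⟨h1, _⟩ | ⟨_, h2⟩
      · exact h1
      · exact absurd (hc_pos x) (not_lt.mpr h2.le)
    · intro h
      exact div_pos h (hc_pos x)
  have hset_eq : ∀ t x, {ω | 0 < q t x ω} = U t x := by
    intro t x; ext ω; exact hqpos_iff t x ω
  -- total mass
  have hcsum : ∑ x : E, c x = 1 := by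
    have hdisj : Pairwise (Function.onFun Disjoint fun x => S x) := by
      intro x y hxy
      refine Set.disjoint_left.mpr fun ω hx hy => hxy ?_
      exact hx.symm.trans hy
    have hun : (⋃ x : E, S x) = Set.univ := by
      ext ω; simp only [Set.mem_iUnion, Set.mem_univ, iff_true]
      exact ⟨L ω, rfl⟩
    have h1 : (1 : ℝ≥0∞) = ∑ x : E, μ (S x) := by
      rw [← tsum_fintype (L := SummationFilter.unconditional _), ← measure_iUnion hdisj (fun x => hSmeas x), hun, measure_univ]
    have : (∑ x : E, μ (S x)).toReal = ∑ x : E, c x := by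
      rw [ENNReal.toReal_sum fun x _ => measure_ne_top μ _]
    rw [← this, ← h1, ENNReal.toReal_one]
  -- representation as a finite sum
  have hY_repr : ∀ t, (fun ω => (q t (L ω) ω)⁻¹)
      = fun ω => ∑ x : E, (S x).indicator (fun ω' => c x * (Z t x ω')⁻¹) ω := by
    intro t
    funext ω
    rw [Fintype.sum_eq_single (L ω) (fun x hx => Set.indicator_of_notMem
      (fun h : ω ∈ S x => hx (h.symm ▸ rfl)) _)]
    rw [Set.indicator_apply, if_pos (show ω ∈ S (L ω) from rfl)]
    exact hqinv t (L ω) ω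
  -- integrability and integral values per fiber
  have hIint : ∀ t x, Integrable ((S x).indicator (fun ω => c x * (Z t x ω)⁻¹)) μ := by
    intro t x
    have h := (vi_main (μ := μ) hL x (ℱ.le t) (MeasurableSet.univ : MeasurableSet[ℱ t] Set.univ)).1
    rw [Set.univ_inter] at h
    exact (integrable_indicator_iff (hSmeas x)).mpr h
  have hIval : ∀ t x, ∫ ω in S x, c x * (Z t x ω)⁻¹ ∂μ = c x * (μ (U t x)).toReal := by
    intro t x
    have h := (vi_main (μ := μ) hL x (ℱ.le t) (MeasurableSet.univ : MeasurableSet[ℱ t] Set.univ)).2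
    rw [Set.univ_inter, Set.univ_inter] at h
    exact h
  have hYint : ∀ t, Integrable (fun ω => (q t (L ω) ω)⁻¹) μ := by
    intro t
    rw [hY_repr t]
    exact integrable_finset_sum _ fun x _ => hIint t x
  have hYval : ∀ t, ∫ ω, (q t (L ω) ω)⁻¹ ∂μ = ∑ x : E, c x * (μ (U t x)).toReal := by
    intro t
    rw [hY_repr t, integral_finset_sum _ fun x _ => hIint t x]
    refine Finset.sum_congr rfl fun x _ => ?_
    rw [integral_indicator (hSmeas x)]
    exact hIval t x
  have htoReal_le : ∀ (A : Set Ω), (μ A).toReal ≤ 1 := fun A => by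
    have := prob_le_one (μ := μ) (s := A)
    calc (μ A).toReal ≤ (1 : ℝ≥0∞).toReal :=
          ENNReal.toReal_mono ENNReal.one_ne_top this
      _ = 1 := ENNReal.toReal_one
  -- Part 1
  have part1 : (∫ ω, (q T (L ω) ω)⁻¹ ∂μ = 1) ↔ (∀ x : E, μ {ω | 0 < q T x ω} = 1) := by
    constructor
    · intro h1 x
      rw [hset_eq T x]
      by_contra hne
      have hlt : μ (U T x) < 1 := lt_of_le_of_ne prob_le_one hne
      have hterm_lt : c x * (μ (U T x)).toReal < c x * 1 := by
        refine mul_lt_mul_of_pos_left ?_ (hc_pos x)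
        rw [← ENNReal.toReal_one]
        exact ENNReal.toReal_strict_mono ENNReal.one_ne_top hlt
      have hsum_lt : ∑ y : E, c y * (μ (U T y)).toReal < ∑ y : E, c y := by
        refine Finset.sum_lt_sum (fun y _ => ?_) ⟨x, Finset.mem_univ x, by simpa using hterm_lt⟩
        calc c y * (μ (U T y)).toReal ≤ c y * 1 :=
              mul_le_mul_of_nonneg_left (htoReal_le _) (hc_pos y).le
          _ = c y := mul_one _
      rw [← hYval T, h1, hcsum] at hsum_lt
      exact lt_irrefl _ hsum_lt
    · intro h1
      rw [hYval T]
      have : ∀ x : E, μ (U T x) = 1 := fun x => by rw [← hset_eq T x]; exact h1 x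
      calc ∑ x : E, c x * (μ (U T x)).toReal = ∑ x : E, c x := by
            refine Finset.sum_congr rfl fun x _ => ?_
            rw [this x, ENNReal.toReal_one, mul_one]
        _ = 1 := hcsum
  refine ⟨part1, ?_, ?_⟩
  · -- Part 2: martingale property
    intro h1 s t hs0 hst htT
    have hposT : ∀ x, ∀ᵐ ω ∂μ, 0 < Z T x ω := by
      intro x
      have hx := part1.mp h1 x
      rw [hset_eq T x] at hx
      rw [Filter.eventually_iff, mem_ae_iff]
      have : {ω | 0 < Z T x ω}ᶜ = (U T x)ᶜ := rfl
      rw [this, prob_compl_eq_zero_iff (hUmeas T x)]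
      exact hx
    have hpos_u : ∀ u, u ≤ T → ∀ x, ∀ᵐ ω ∂μ, 0 < Z u x ω := by
      intro u hu x
      have htower : μ[Z T x | ℱ u] =ᵐ[μ] Z u x :=
        condExp_condExp_of_le (ℱ.mono hu) (ℱ.le T)
      have hp := vi_condexp_pos (ℱ.le u) (integrable_condExp) (hposT x)
      exact (hp.and htower).mono fun ω ⟨h1, h2⟩ => h2 ▸ h1
    have hU1 : ∀ u, u ≤ T → ∀ x, μ (U u x) = 1 := by
      intro u hu x
      rw [← prob_compl_eq_zero_iff (hUmeas u x)]
      have := hpos_u u hu x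
      rw [Filter.eventually_iff, mem_ae_iff] at this
      exact this
    have hcomap : MeasurableSpace.comap L ⊤ ≤ m0 := by
      rintro A ⟨A', -, rfl⟩
      exact hL A'.toFinite.measurableSet
    have hm' : (ℱ s ⊔ MeasurableSpace.comap L ⊤ : MeasurableSpace Ω) ≤ m0 := sup_le (ℱ.le s) hcomap
    haveI : SigmaFinite (μ.trim hm') := by infer_instance
    refine (ae_eq_condExp_of_forall_setIntegral_eq hm' (hYint t) ?_ ?_ ?_).symm
    · intro A hA hμA
      exact (hYint s).integrableOn
    · intro A hA hμA
      obtain ⟨B, hBmeas, hBeq⟩ : ∃ B : E → Set Ω, (∀ x, MeasurableSet[ℱ s] (B x)) ∧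
          ∀ x, A ∩ {ω | L ω = x} = B x ∩ {ω | L ω = x} := by
        have h := fun x => vi_decomp (ℱ s) hA x
        choose B hB1 hB2 using h
        exact ⟨B, hB1, hB2⟩
      have hcompute : ∀ u, s ≤ u → u ≤ T →
          ∫ ω in A, (q u (L ω) ω)⁻¹ ∂μ = ∑ x : E, c x * (μ (B x)).toReal := by
        intro u hu huT
        rw [hY_repr u]
        rw [integral_finset_sum _ fun x _ => (hIint u x).integrableOn]
        refine Finset.sum_congr rfl fun x _ => ?_
        rw [setIntegral_indicator (hSmeas x)]
        have hBu : MeasurableSet[ℱ u] (B x) := ℱ.mono hu _ (hBmeas x)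
        have h := (vi_main (μ := μ) hL x (ℱ.le u) hBu).2
        have hAB : A ∩ S x = B x ∩ S x := hBeq x
        rw [hAB]
        rw [h]
        have hconull : μ (B x ∩
            {ω | 0 < (μ[Set.indicator {ω' | L ω' = x} (fun _ => (1:ℝ)) | ℱ u]) ω})
            = μ (B x) := by
          refine measure_inter_conull ?_
          have hc0 : μ (U u x)ᶜ = 0 := by
            rw [prob_compl_eq_zero_iff (hUmeas u x)]; exact hU1 u huT x
          exact hc0
        rw [hconull]
      rw [hcompute s le_rfl (hst.trans htT), hcompute t hst htT]
    · refine StronglyMeasurable.aestronglyMeasurable ?_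
      rw [hY_repr s]
      have hmeas : Measurable[ℱ s ⊔ MeasurableSpace.comap L ⊤] fun ω =>
          ∑ x : E, (S x).indicator (fun ω' => c x * (Z s x ω')⁻¹) ω := by
        refine Finset.measurable_sum _ fun x _ => ?_
        have hSx : MeasurableSet[ℱ s ⊔ MeasurableSpace.comap L ⊤] (S x) := by
          refine (le_sup_right : MeasurableSpace.comap L ⊤ ≤ ℱ s ⊔ MeasurableSpace.comap L ⊤)
            _ ?_
          exact ⟨{x}, trivial, rfl⟩
        have hZx : Measurable[ℱ s ⊔ MeasurableSpace.comap L ⊤]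
            fun ω => c x * (Z s x ω)⁻¹ := by
          have : StronglyMeasurable[ℱ s ⊔ MeasurableSpace.comap L ⊤] (Z s x) :=
            (hZsm s x).mono le_sup_left
          exact this.measurable.inv.const_mul (c x)
        exact hZx.indicator hSx
      exact hmeas.stronglyMeasurable
  · -- Part 3: converse
    intro h
    have h0T := h 0 T le_rfl hT le_rfl
    have hcomap : MeasurableSpace.comap L ⊤ ≤ m0 := by
      rintro A ⟨A', -, rfl⟩
      exact hL A'.toFinite.measurableSet
    have hm' : (ℱ 0 ⊔ MeasurableSpace.comap L ⊤ : MeasurableSpace Ω) ≤ m0 := sup_le (ℱ.le 0) hcomap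
    haveI : SigmaFinite (μ.trim hm') := by infer_instance
    have hU0 : ∀ x, μ (U 0 x) = 1 := by
      intro x
      have hU0m : MeasurableSet[ℱ 0] (U 0 x) :=
        measurableSet_lt measurable_const (hZsm 0 x).measurable
      rcases hF0 _ hU0m with h0 | h1
      · exfalso
        have hae : ∀ᵐ ω ∂μ, ω ∉ U 0 x := measure_eq_zero_iff_ae_notMem.mp h0
        have hz : Z 0 x =ᵐ[μ] 0 := by
          refine ((hZnn 0 x).and hae).mono fun ω ⟨hge, hnmem⟩ => ?_
          have : ¬ 0 < Z 0 x ω := hnmem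
          exact le_antisymm (not_lt.mp this) hge
        have hint0 : ∫ ω, Z 0 x ω ∂μ = 0 := by
          rw [integral_congr_ae hz]
          simp
        have hintc : ∫ ω, Z 0 x ω ∂μ = c x := by
          rw [hZdef]
          simp only []
          rw [integral_condExp (ℱ.le 0)]
          rw [integral_indicator_const (1 : ℝ) (hSmeas x)]
          simp [hcdef, measureReal_def]
        rw [hintc] at hint0
        exact (hc_pos x).ne' hint0
      · exact h1
    calc ∫ ω, (q T (L ω) ω)⁻¹ ∂μ
        = ∫ ω, (μ[(fun ω => (q T (L ω) ω)⁻¹) | ℱ 0 ⊔ MeasurableSpace.comap L ⊤]) ω ∂μ :=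
          (integral_condExp hm').symm
      _ = ∫ ω, (q 0 (L ω) ω)⁻¹ ∂μ := integral_congr_ae h0T
      _ = ∑ x : E, c x * (μ (U 0 x)).toReal := hYval 0
      _ = ∑ x : E, c x := by
          refine Finset.sum_congr rfl fun x _ => ?_
          rw [hU0 x, ENNReal.toReal_one, mul_one]
      _ = 1 := hcsum
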